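/- For every integer k ≥ 1, every real λ > 0, and every integer n ≥ 1, the probability mass function of the Poisson distribution of order k satisfies the recurrence P_n(k,λ) = (λ/n) · Σ_{j=1}^{min(n,k)} j · P_{n−j}(k,λ). -/

import Mathlib

open scoped BigOperators

/-- Probability mass function of the Poisson distribution of order `k` with rate `lam`:
`P_n(k,λ) = e^{-kλ} · Σ_{n₁+2n₂+⋯+k·n_k = n} ∏_{j=1}^k λ^{n_j}/n_j!`. -/
noncomputable def poissonK (k : ℕ) (lam : ℝ) (n : ℕ) : ℝ :=
  Real.exp (-(k * lam)) *
    ∑ f ∈ Finset.filter (fun f : Fin k → ℕ => ∑ j : Fin k, (j.1 + 1) * f j = n)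
        (Fintype.piFinset fun _ : Fin k => Finset.range (n + 1)),
      ∏ j : Fin k, lam ^ f j / (Nat.factorial (f j) : ℝ)

namespace PoissonKAux

noncomputable def W (k : ℕ) (lam : ℝ) (f : Fin k → ℕ) : ℝ :=
  ∏ j : Fin k, lam ^ f j / (Nat.factorial (f j) : ℝ)

def A (k n m : ℕ) : Finset (Fin k → ℕ) :=
  Finset.filter (fun f : Fin k → ℕ => ∑ j : Fin k, (j.1 + 1) * f j = n)
    (Fintype.piFinset fun _ : Fin k => Finset.range (m + 1))

lemma mem_A {k n m : ℕ} {f : Fin k → ℕ} :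
    f ∈ A k n m ↔ (∀ i, f i ≤ m) ∧ ∑ j : Fin k, (j.1 + 1) * f j = n := by
  simp [A, Finset.mem_filter, Fintype.mem_piFinset, Nat.lt_succ_iff]

lemma bound {k n : ℕ} {f : Fin k → ℕ}
    (h : ∑ j : Fin k, (j.1 + 1) * f j = n) (i : Fin k) : f i ≤ n := by
  have h1 : (i.1 + 1) * f i ≤ n := by
    have h2 := Finset.single_le_sum (f := fun j : Fin k => (j.1 + 1) * f j)
      (fun _ _ => Nat.zero_le _) (Finset.mem_univ i)
    rw [h] at h2; exact h2
  calc f i ≤ (i.1 + 1) * f i := Nat.le_mul_of_pos_left _ (Nat.succ_pos _)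
    _ ≤ n := h1

lemma A_cutoff {k n m : ℕ} (h : n ≤ m) : A k n m = A k n n := by
  ext f
  simp only [mem_A]
  constructor
  · rintro ⟨_, hs⟩; exact ⟨fun i => bound hs i, hs⟩
  · rintro ⟨hb, hs⟩; exact ⟨fun i => le_trans (hb i) h, hs⟩

lemma sum_update {k : ℕ} (g : Fin k → ℕ) (j : Fin k) (v : ℕ) :
    ∑ i : Fin k, (i.1 + 1) * Function.update g j v i
      = ∑ i ∈ Finset.univ.erase j, (i.1 + 1) * g i + (j.1 + 1) * v := by
  rw [← Finset.sum_erase_add _ _ (Finset.mem_univ j)]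
  congr 1
  · refine Finset.sum_congr rfl (fun i hi => ?_)
    rw [Function.update_of_ne (Finset.ne_of_mem_erase hi)]
  · rw [Function.update_self]

lemma W_split {k : ℕ} (lam : ℝ) (j : Fin k) (u : Fin k → ℕ) :
    W k lam u = (lam ^ u j / (Nat.factorial (u j) : ℝ)) *
      ∏ i ∈ Finset.univ.erase j, lam ^ u i / (Nat.factorial (u i) : ℝ) :=
  (Finset.mul_prod_erase _ _ (Finset.mem_univ j)).symm

lemma key {k : ℕ} (lam : ℝ) {n : ℕ} (j : Fin k) (hj : j.1 + 1 ≤ n) :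
    ∑ f ∈ A k n n, (f j : ℝ) * W k lam f
      = lam * ∑ g ∈ A k (n - (j.1 + 1)) n, W k lam g := by
  rw [← Finset.sum_filter_of_ne (p := fun f : Fin k → ℕ => f j ≠ 0)
        (fun f _ hf => by intro h0; apply hf; simp [h0])]
  rw [Finset.mul_sum]
  symm
  refine Finset.sum_bij' (i := fun g _ => Function.update g j (g j + 1))
    (j := fun f _ => Function.update f j (f j - 1)) ?_ ?_ ?_ ?_ ?_
  · -- hi
    intro g hg
    obtain ⟨hb, hs⟩ := mem_A.mp hg
    have hgj : g j ≤ n - (j.1 + 1) := bound hs j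
    have h0 : ∑ i ∈ Finset.univ.erase j, (i.1 + 1) * g i + (j.1 + 1) * g j
        = n - (j.1 + 1) := by
      rw [Finset.sum_erase_add _ _ (Finset.mem_univ j)]; exact hs
    refine Finset.mem_filter.mpr ⟨mem_A.mpr ⟨?_, ?_⟩, ?_⟩
    · intro i
      by_cases h : i = j
      · subst h; rw [Function.update_self]; omega
      · rw [Function.update_of_ne h]; exact hb i
    · rw [sum_update]
      have h2 : (j.1 + 1) * (g j + 1) = (j.1 + 1) * g j + (j.1 + 1) := by ring
      omega
    · rw [Function.update_self]; omega
  · -- hj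
    intro f hf
    obtain ⟨hf', hne⟩ := Finset.mem_filter.mp hf
    obtain ⟨hb, hs⟩ := mem_A.mp hf'
    have h0 : ∑ i ∈ Finset.univ.erase j, (i.1 + 1) * f i + (j.1 + 1) * f j = n := by
      rw [Finset.sum_erase_add _ _ (Finset.mem_univ j)]; exact hs
    refine mem_A.mpr ⟨?_, ?_⟩
    · intro i
      by_cases h : i = j
      · subst h; rw [Function.update_self]; have := hb i; omega
      · rw [Function.update_of_ne h]; exact hb i
    · rw [sum_update]
      obtain ⟨m, hm⟩ : ∃ m, f j = m + 1 := ⟨f j - 1, by have := Nat.pos_of_ne_zero hne; omega⟩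
      have h2 : (j.1 + 1) * (f j - 1) + (j.1 + 1) = (j.1 + 1) * f j := by
        rw [hm, Nat.add_sub_cancel]; ring
      omega
  · -- left inverse
    intro g _
    rw [Function.update_idem, Function.update_self, Nat.add_sub_cancel,
      Function.update_eq_self]
  · -- right inverse
    intro f hf
    have hne : f j ≠ 0 := (Finset.mem_filter.mp hf).2
    rw [Function.update_idem, Function.update_self,
      Nat.sub_add_cancel (Nat.pos_of_ne_zero hne), Function.update_eq_self]
  · -- term equality
    intro g _
    have hupj : Function.update g j (g j + 1) j = g j + 1 := Function.update_self _ _ _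
    rw [W_split lam j g, W_split lam j (Function.update g j (g j + 1)), hupj]
    have hprod : ∏ i ∈ Finset.univ.erase j,
          lam ^ (Function.update g j (g j + 1) i) /
            (Nat.factorial (Function.update g j (g j + 1) i) : ℝ)
        = ∏ i ∈ Finset.univ.erase j, lam ^ g i / (Nat.factorial (g i) : ℝ) := by
      refine Finset.prod_congr rfl (fun i hi => ?_)
      rw [Function.update_of_ne (Finset.ne_of_mem_erase hi)]
    rw [hprod]
    have hfac : (Nat.factorial (g j + 1) : ℝ) = (g j + 1 : ℝ) * Nat.factorial (g j) := by
      rw [Nat.factorial_succ]; push_cast; ring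
    have h1 : (Nat.factorial (g j) : ℝ) ≠ 0 := Nat.cast_ne_zero.mpr (Nat.factorial_ne_zero _)
    have h2 : (g j + 1 : ℝ) ≠ 0 := by positivity
    rw [hfac, pow_succ]
    push_cast
    field_simp

lemma keyzero {k : ℕ} (lam : ℝ) {n : ℕ} (j : Fin k) (hj : n < j.1 + 1) :
    ∑ f ∈ A k n n, (f j : ℝ) * W k lam f = 0 := by
  refine Finset.sum_eq_zero (fun f hf => ?_)
  obtain ⟨hb, hs⟩ := mem_A.mp hf
  have h1 : (j.1 + 1) * f j ≤ n := by
    have h2 := Finset.single_le_sum (f := fun i : Fin k => (i.1 + 1) * f i)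
      (fun _ _ => Nat.zero_le _) (Finset.mem_univ j)
    rw [hs] at h2; exact h2
  have hz : f j = 0 := by
    rcases Nat.eq_zero_or_pos (f j) with h | h
    · exact h
    · exfalso; have := Nat.le_mul_of_pos_right (j.1 + 1) h; omega
  simp [hz]

lemma main {k : ℕ} (lam : ℝ) {n : ℕ} (hn : 1 ≤ n) :
    (n : ℝ) * ∑ f ∈ A k n n, W k lam f
      = lam * ∑ j ∈ Finset.Icc 1 (min n k), (j : ℝ) *
          ∑ g ∈ A k (n - j) (n - j), W k lam g := by
  rw [Finset.mul_sum]
  have step1 : ∀ f ∈ A k n n,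
      (n : ℝ) * W k lam f = ∑ j : Fin k, ((j.1 : ℝ) + 1) * ((f j : ℝ) * W k lam f) := by
    intro f hf
    obtain ⟨_, hs⟩ := mem_A.mp hf
    have hcast : (n : ℝ) = ∑ j : Fin k, ((j.1 : ℝ) + 1) * (f j : ℝ) := by
      rw [← hs]; push_cast; ring
    rw [hcast, Finset.sum_mul]
    exact Finset.sum_congr rfl (fun j _ => by ring)
  rw [Finset.sum_congr rfl step1, Finset.sum_comm]
  set F : ℕ → ℝ := fun m => if m + 1 ≤ n then
      ((m : ℝ) + 1) * (lam * ∑ g ∈ A k (n - (m + 1)) (n - (m + 1)), W k lam g)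
    else 0 with hF
  have step2 : ∀ j : Fin k,
      ∑ f ∈ A k n n, ((j.1 : ℝ) + 1) * ((f j : ℝ) * W k lam f) = F j.1 := by
    intro j
    rw [← Finset.mul_sum, hF]
    by_cases hj : j.1 + 1 ≤ n
    · simp only [hj, if_true]
      rw [key lam j hj, A_cutoff (Nat.sub_le n (j.1 + 1))]
    · simp only [hj, if_false]
      rw [keyzero lam j (by omega), mul_zero]
  rw [Finset.sum_congr rfl (fun j _ => step2 j)]
  rw [Fin.sum_univ_eq_sum_range F k]
  rw [Finset.mul_sum]
  have hset : Finset.Icc 1 (min n k) = Finset.filter (fun j => j ≤ n) (Finset.Icc 1 k) := by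
    ext x; simp only [Finset.mem_Icc, Finset.mem_filter]; omega
  rw [hset, Finset.sum_filter]
  have hIcc : Finset.Icc 1 k = Finset.Ico 1 (k + 1) := by
    rw [Finset.Ico_add_one_right_eq_Icc]
  rw [hIcc, Finset.sum_Ico_eq_sum_range]
  refine Finset.sum_congr (by norm_num) (fun i _ => ?_)
  rw [hF]
  by_cases hi : i + 1 ≤ n
  · simp only [hi, if_true, show 1 + i ≤ n by omega, if_true]
    have h12 : 1 + i = i + 1 := by omega
    rw [h12]; push_cast; ring
  · simp only [hi, if_false, show ¬(1 + i ≤ n) by omega, if_false, mul_zero]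

end PoissonKAux

/-- Recurrence for the pmf of the Poisson distribution of order `k`:
`P_n = (λ/n) · Σ_{j=1}^{min(n,k)} j · P_{n−j}` for `n ≥ 1`. -/
theorem poissonK_pmf_recurrence (k : ℕ) (hk : 1 ≤ k) (lam : ℝ) (hlam : 0 < lam)
    (n : ℕ) (hn : 1 ≤ n) :
    poissonK k lam n =
      lam / n * ∑ j ∈ Finset.Icc 1 (min n k), (j : ℝ) * poissonK k lam (n - j) := by
  have hpk : ∀ m : ℕ, poissonK k lam m
      = Real.exp (-(k * lam)) * ∑ f ∈ PoissonKAux.A k m m, PoissonKAux.W k lam f := by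
    intro m; rfl
  simp only [hpk]
  have hmain := PoissonKAux.main (k := k) lam hn
  have hn0 : (n : ℝ) ≠ 0 := Nat.cast_ne_zero.mpr (by omega)
  have hrw : ∑ j ∈ Finset.Icc 1 (min n k), (j : ℝ) *
        (Real.exp (-(k * lam)) * ∑ f ∈ PoissonKAux.A k (n - j) (n - j), PoissonKAux.W k lam f)
      = Real.exp (-(k * lam)) * ∑ j ∈ Finset.Icc 1 (min n k), (j : ℝ) *
          ∑ f ∈ PoissonKAux.A k (n - j) (n - j), PoissonKAux.W k lam f := by
    rw [Finset.mul_sum]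
    exact Finset.sum_congr rfl (fun j _ => by ring)
  rw [hrw]
  field_simp
  linear_combination hmain
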